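/- Let γ(t) = x(t) + iy(t) be a smooth curve in the hyperbolic half-plane ℍ and u₀ a tangent vector at γ(t₀). Then the parallel transport of u₀ along γ from t₀ to t is u(t) = (y(t)/y(t₀)) · R(−θ(t₀,t)) u₀, where R(α) is the rotation matrix by angle α acting on (u₁,u₂) and θ(t₀,t) = ∫_{t₀}^{t} x'(τ)/y(τ) dτ. That is, the solution of ∇_{γ'(t)}u(t) = 0 with u(t₀) = u₀ is given by this formula. -/

import Mathlib

/-- parallel transport in the hyperbolic half-plane. If `u = u₁ + iu₂` solves
`∇_{γ'}u = 0` along `γ = x + iy`, i.e. `u₁' = (x'u₂ + y'u₁)/y` and `u₂' = (y'u₂ − x'u₁)/y`,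
with initial value `u(t₀)`, then
`u(t) = (y(t)/y(t₀)) · [[cos θ, sin θ],[−sin θ, cos θ]] u(t₀)`
where `θ = θ(t₀,t) = ∫_{t₀}^t x'(τ)/y(τ) dτ`. -/
theorem hyperbolic_parallel_transport
    (x y u₁ u₂ : ℝ → ℝ) (t₀ : ℝ)
    (hx : ContDiff ℝ 1 x) (hy : ContDiff ℝ 1 y)
    (hu₁ : Differentiable ℝ u₁) (hu₂ : Differentiable ℝ u₂)
    (hypos : ∀ t, 0 < y t)
    -- the parallel transport ODE ∇_{γ'}u = 0
    (hode₁ : ∀ t, deriv u₁ t = (deriv x t * u₂ t + deriv y t * u₁ t) / y t)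
    (hode₂ : ∀ t, deriv u₂ t = (deriv y t * u₂ t - deriv x t * u₁ t) / y t) :
    ∀ t : ℝ,
      u₁ t = (y t / y t₀) *
          (Real.cos (∫ τ in t₀..t, deriv x τ / y τ) * u₁ t₀
            + Real.sin (∫ τ in t₀..t, deriv x τ / y τ) * u₂ t₀) ∧
      u₂ t = (y t / y t₀) *
          (- Real.sin (∫ τ in t₀..t, deriv x τ / y τ) * u₁ t₀
            + Real.cos (∫ τ in t₀..t, deriv x τ / y τ) * u₂ t₀) := by
  have hyne : ∀ t, y t ≠ 0 := fun t => (hypos t).ne'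
  set g : ℝ → ℝ := fun τ => deriv x τ / y τ with hgdef
  have hgc : Continuous g := (hx.continuous_deriv le_rfl).div hy.continuous hyne
  set θ : ℝ → ℝ := fun s => ∫ τ in t₀..s, g τ with hθdef
  have hθ : ∀ s, HasDerivAt θ (g s) s := fun s =>
    (hgc.integral_hasStrictDerivAt t₀ s).hasDerivAt
  have hθ0 : θ t₀ = 0 := intervalIntegral.integral_same
  have hyd : ∀ s, HasDerivAt y (deriv y s) s := fun s =>
    ((hy.differentiable one_ne_zero) s).hasDerivAt
  -- the two conserved quantities
  set F₁ : ℝ → ℝ := fun s => (Real.cos (θ s) * u₁ s - Real.sin (θ s) * u₂ s) / y s with hF₁def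
  set F₂ : ℝ → ℝ := fun s => (Real.sin (θ s) * u₁ s + Real.cos (θ s) * u₂ s) / y s with hF₂def
  have hnum : ∀ s, HasDerivAt (fun r => Real.cos (θ r) * u₁ r - Real.sin (θ r) * u₂ r)
      ((-Real.sin (θ s) * g s) * u₁ s + Real.cos (θ s) * deriv u₁ s
        - ((Real.cos (θ s) * g s) * u₂ s + Real.sin (θ s) * deriv u₂ s)) s := by
    intro s
    have hc : HasDerivAt (fun r => Real.cos (θ r)) (-Real.sin (θ s) * g s) s :=
      (Real.hasDerivAt_cos (θ s)).comp s (hθ s)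
    have hsn : HasDerivAt (fun r => Real.sin (θ r)) (Real.cos (θ s) * g s) s :=
      (Real.hasDerivAt_sin (θ s)).comp s (hθ s)
    exact (hc.mul (hu₁ s).hasDerivAt).sub (hsn.mul (hu₂ s).hasDerivAt)
  have hnum2 : ∀ s, HasDerivAt (fun r => Real.sin (θ r) * u₁ r + Real.cos (θ r) * u₂ r)
      ((Real.cos (θ s) * g s) * u₁ s + Real.sin (θ s) * deriv u₁ s
        + ((-Real.sin (θ s) * g s) * u₂ s + Real.cos (θ s) * deriv u₂ s)) s := by
    intro s
    have hc : HasDerivAt (fun r => Real.cos (θ r)) (-Real.sin (θ s) * g s) s :=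
      (Real.hasDerivAt_cos (θ s)).comp s (hθ s)
    have hsn : HasDerivAt (fun r => Real.sin (θ r)) (Real.cos (θ s) * g s) s :=
      (Real.hasDerivAt_sin (θ s)).comp s (hθ s)
    exact (hsn.mul (hu₁ s).hasDerivAt).add (hc.mul (hu₂ s).hasDerivAt)
  have hF₁' : ∀ s, HasDerivAt F₁ 0 s := by
    intro s
    have h := (hnum s).div (hyd s) (hyne s)
    convert h using 1
    · rfl
    · rfl
    · rfl
    rw [hode₁ s, hode₂ s, hgdef]
    field_simp [hyne s]
    ring
  have hF₂' : ∀ s, HasDerivAt F₂ 0 s := by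
    intro s
    have h := (hnum2 s).div (hyd s) (hyne s)
    convert h using 1
    · rfl
    · rfl
    · rfl
    rw [hode₁ s, hode₂ s, hgdef]
    field_simp [hyne s]
    ring
  have hF₁c : ∀ s, F₁ s = F₁ t₀ :=
    fun s => is_const_of_deriv_eq_zero (fun r => (hF₁' r).differentiableAt)
      (fun r => (hF₁' r).deriv) s t₀
  have hF₂c : ∀ s, F₂ s = F₂ t₀ :=
    fun s => is_const_of_deriv_eq_zero (fun r => (hF₂' r).differentiableAt)
      (fun r => (hF₂' r).deriv) s t₀
  intro t
  have e1 := hF₁c t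
  have e2 := hF₂c t
  simp only [hF₁def, hF₂def, hθ0, Real.cos_zero, Real.sin_zero] at e1 e2
  have hy0 := hyne t₀
  have hyt := hyne t
  rw [div_eq_div_iff hyt hy0] at e1 e2
  have key := Real.sin_sq_add_cos_sq (θ t)
  constructor
  · show u₁ t = y t / y t₀ * (Real.cos (θ t) * u₁ t₀ + Real.sin (θ t) * u₂ t₀)
    rw [div_mul_eq_mul_div, eq_div_iff hy0]
    linear_combination Real.cos (θ t) * e1 + Real.sin (θ t) * e2 - u₁ t * y t₀ * key
  · show u₂ t = y t / y t₀ * (-Real.sin (θ t) * u₁ t₀ + Real.cos (θ t) * u₂ t₀)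
    rw [div_mul_eq_mul_div, eq_div_iff hy0]
    linear_combination (-Real.sin (θ t)) * e1 + Real.cos (θ t) * e2 - u₂ t * y t₀ * key
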